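/- Let α and β be complex numbers such that αⁿ − βⁿ is an integer for every natural number n ≥ 1. Then either α = β, or both α and β are integers (i.e., both are integer-valued real numbers). -/

import Mathlib

lemma key_rat (q : ℚ) (m : ℤ) (hm : m ≠ 0)
    (H : ∀ n : ℕ, 1 ≤ n → ∃ z : ℤ, (q + m) ^ n - q ^ n = z) : ∃ a : ℤ, q = a := by
  suffices hden : q.den = 1 by
    exact ⟨q.num, by rw [← Rat.num_div_den q, hden]; simp⟩
  by_contra hden
  set p : ℕ := q.den.minFac with hpdef
  have hp : p.Prime := Nat.minFac_prime hden
  haveI : Fact p.Prime := ⟨hp⟩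
  have hpb : p ∣ q.den := Nat.minFac_dvd _
  set y : ℤ := q.num with hydef
  set b : ℤ := (q.den : ℤ) with hbdef
  set d : ℤ := m * b with hddef
  set x : ℤ := y + d with hxdef
  have hb0 : b ≠ 0 := by
    simp [hbdef, q.den_nz]
  have hd0 : d ≠ 0 := mul_ne_zero hm hb0
  set n : ℕ := d.natAbs * p + 1 with hndef
  have hn1 : 1 ≤ n := Nat.le_add_left 1 _
  obtain ⟨z, hz⟩ := H n hn1
  -- turn hz into an integer equation
  have hq : (q : ℚ) = (y : ℚ) / b := (Rat.num_div_den q).symm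
  have hbQ : ((b : ℚ)) ≠ 0 := by exact_mod_cast hb0
  have hZQ : (x : ℚ) ^ n - (y : ℚ) ^ n = (z : ℚ) * (b : ℚ) ^ n := by
    have h1 : ((x : ℚ) / b) ^ n - ((y : ℚ) / b) ^ n = z := by
      have hqm : q + (m : ℚ) = (x : ℚ) / b := by
        rw [hq]; push_cast [hxdef]; field_simp
        rw [hddef]; push_cast; ring
      rw [← hqm, ← hq]; exact hz
    rw [div_pow, div_pow, ← sub_div, div_eq_iff (pow_ne_zero _ hbQ)] at h1
    linarith
  have hZ : x ^ n - y ^ n = z * b ^ n := by exact_mod_cast hZQ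
  have hpbZ : (p : ℤ) ∣ b := by rw [hbdef]; exact_mod_cast hpb
  have hpdZ : (p : ℤ) ∣ d := hddef ▸ hpbZ.mul_left m
  have hpdvd : (p : ℤ) ^ n ∣ x ^ n - y ^ n := by
    rw [hZ]
    exact Dvd.dvd.mul_left (pow_dvd_pow_of_dvd hpbZ n) z
  set S : ℤ := ∑ i ∈ Finset.range n, x ^ i * y ^ (n - 1 - i) with hSdef
  have hgeom : S * (x - y) = x ^ n - y ^ n := geom_sum₂_mul x y n
  have hxy : x - y = d := by rw [hxdef]; ring
  -- p does not divide y
  have hpy : ¬ (p : ℤ) ∣ y := by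
    intro hdvd
    have h1 : p ∣ y.natAbs := by
      rwa [Int.natCast_dvd_natCast.symm, Int.dvd_natAbs]
    have h2 : p ∣ 1 := q.reduced ▸ Nat.dvd_gcd h1 hpb
    exact hp.one_lt.ne' (Nat.dvd_one.mp h2)
  -- p does not divide S
  have hpS : ¬ (p : ℤ) ∣ S := by
    rw [← ZMod.intCast_zmod_eq_zero_iff_dvd]
    push_cast [hSdef]
    have hxZ : (x : ZMod p) = (y : ZMod p) := by
      have hd0' : ((d : ℤ) : ZMod p) = 0 := by
        rw [ZMod.intCast_zmod_eq_zero_iff_dvd]; exact hpdZ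
      push_cast [hxdef]
      rw [hd0']; ring
    rw [hxZ]
    have hsum : ∑ i ∈ Finset.range n, (y : ZMod p) ^ i * (y : ZMod p) ^ (n - 1 - i)
        = (n : ZMod p) * (y : ZMod p) ^ (n - 1) := by
      rw [Finset.sum_congr rfl (fun i hi => ?_), Finset.sum_const, Finset.card_range,
        nsmul_eq_mul]
      rw [← pow_add]
      congr 1
      have : i < n := Finset.mem_range.mp hi
      omega
    rw [hsum]
    have hy0 : (y : ZMod p) ≠ 0 := by
      rw [Ne, ZMod.intCast_zmod_eq_zero_iff_dvd]
      exact hpy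
    have hn0 : (n : ZMod p) ≠ 0 := by
      rw [Ne, ZMod.natCast_eq_zero_iff, hndef]
      intro hdvd
      have := (Nat.dvd_add_right (dvd_mul_left p d.natAbs)).mp hdvd
      exact hp.one_lt.ne' (Nat.dvd_one.mp this)
    exact mul_ne_zero hn0 (pow_ne_zero _ hy0)
  -- coprimality and divisibility of d
  have hprime : Prime (p : ℤ) := Nat.prime_iff_prime_int.mp hp
  have hco : IsCoprime ((p : ℤ) ^ n) S :=
    ((hprime.coprime_iff_not_dvd).mpr hpS).pow_left
  have hdvd_d : (p : ℤ) ^ n ∣ d := by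
    have : (p : ℤ) ^ n ∣ S * d := by rw [← hxy, hgeom]; exact hpdvd
    exact hco.dvd_of_dvd_mul_left this
  -- size contradiction
  have hle : (p : ℤ) ^ n ≤ |d| :=
    Int.le_of_dvd (abs_pos.mpr hd0) ((dvd_abs _ _).mpr hdvd_d)
  have h2p : (2 : ℤ) ^ n ≤ (p : ℤ) ^ n := by
    apply pow_le_pow_left₀ (by norm_num)
    exact_mod_cast hp.two_le
  have hlt : |d| < (2 : ℤ) ^ n := by
    rw [Int.abs_eq_natAbs]
    have h1 : d.natAbs < n := by
      have := hp.two_le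
      have : d.natAbs * 1 ≤ d.natAbs * p := Nat.mul_le_mul_left _ hp.one_lt.le
      omega
    have h2 : n < 2 ^ n := Nat.lt_two_pow_self
    exact_mod_cast Nat.lt_trans h1 h2
  linarith

theorem stmt_4 (α β : ℂ) (h : ∀ n : ℕ, 1 ≤ n → ∃ z : ℤ, α ^ n - β ^ n = z) :
    α = β ∨ ((∃ a : ℤ, α = a) ∧ (∃ b : ℤ, β = b)) := by
  obtain ⟨m, hm1⟩ := h 1 le_rfl
  simp only [pow_one] at hm1
  by_cases hm : m = 0
  · left
    rw [hm] at hm1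
    push_cast at hm1
    linear_combination hm1
  · right
    obtain ⟨z2, h2⟩ := h 2 (by norm_num)
    have hmC : (m : ℂ) ≠ 0 := by exact_mod_cast hm
    have hβeq : (2 * (m : ℂ)) * β = (z2 : ℂ) - (m : ℂ) ^ 2 := by
      linear_combination h2 - (α + β + (m : ℂ)) * hm1
    set q : ℚ := ((z2 : ℚ) - (m : ℚ) ^ 2) / (2 * m) with hqdef
    have hβq : β = (q : ℂ) := by
      rw [hqdef]
      push_cast
      rw [eq_div_iff (by simpa using hmC : (2 * (m : ℂ)) ≠ 0)]
      linear_combination hβeq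
    have hαq : α = ((q + m : ℚ) : ℂ) := by
      push_cast
      rw [← hβq]
      linear_combination hm1
    have H : ∀ n : ℕ, 1 ≤ n → ∃ z : ℤ, (q + m) ^ n - q ^ n = z := by
      intro n hn
      obtain ⟨z, hz⟩ := h n hn
      refine ⟨z, ?_⟩
      rw [hαq, hβq] at hz
      exact_mod_cast hz
    obtain ⟨a, ha⟩ := key_rat q m hm H
    refine ⟨⟨a + m, ?_⟩, ⟨a, ?_⟩⟩
    · rw [hαq, ha]; push_cast; ring
    · rw [hβq, ha]; push_cast; ring
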